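/- Let a : ℝ → ℝ be continuous with a(x) > 0 for all x, let H : ℝ × ℝ → ℝ be continuous and, for every R > 0, Lipschitz with constant C_R in its first argument on [-R,R] uniformly in x. Let f₁, f₂ : ℝ → ℝ be bounded C¹ functions with a(x)f₁'(x) + H(f₁(x), x) ≤ a(x)f₂'(x) + H(f₂(x), x) for all x. If f₁(x₀) < f₂(x₀) for some x₀, then f₁(x) < f₂(x) for all x ≥ x₀. -/

import Mathlib

open Set

/-- Deterministic core of Lemma A.4 (no-touching/comparison): once an ordered
configuration `f₁(x₀) < f₂(x₀)` occurs, it persists to the right. -/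
theorem stmt12
    (a : ℝ → ℝ) (ha_cont : Continuous a) (ha_pos : ∀ x, 0 < a x)
    (H : ℝ → ℝ → ℝ) (hH_cont : Continuous (fun q : ℝ × ℝ => H q.1 q.2))
    (hH_lip : ∀ R > (0 : ℝ), ∃ C : ℝ, ∀ p ∈ Icc (-R) R, ∀ q ∈ Icc (-R) R, ∀ x : ℝ,
      |H p x - H q x| ≤ C * |p - q|)
    (f₁ f₂ f₁' f₂' : ℝ → ℝ)
    (hf₁ : ∀ x, HasDerivAt f₁ (f₁' x) x) (hf₂ : ∀ x, HasDerivAt f₂ (f₂' x) x)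
    (hf₁c : Continuous f₁') (hf₂c : Continuous f₂')
    (hb₁ : ∃ B, ∀ x, |f₁ x| ≤ B) (hb₂ : ∃ B, ∀ x, |f₂ x| ≤ B)
    (hord : ∀ x, a x * f₁' x + H (f₁ x) x ≤ a x * f₂' x + H (f₂ x) x)
    (x₀ : ℝ) (h₀ : f₁ x₀ < f₂ x₀) :
    ∀ x, x₀ ≤ x → f₁ x < f₂ x := by
  by_contra hcon
  push_neg at hcon
  obtain ⟨y, hy₀, hyle⟩ := hcon
  obtain ⟨B₁, hB₁⟩ := hb₁
  obtain ⟨B₂, hB₂⟩ := hb₂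
  set R : ℝ := |B₁| + |B₂| + 1 with hR_def
  have hR : 0 < R := by positivity
  obtain ⟨C, hC⟩ := hH_lip R hR
  set C₀ : ℝ := max C 0 with hC₀
  have hC₀nn : 0 ≤ C₀ := le_max_right _ _
  have hmem₁ : ∀ x, f₁ x ∈ Icc (-R) R := by
    intro x
    have := hB₁ x
    have h1 : B₁ ≤ |B₁| := le_abs_self _
    constructor <;> [skip; skip] <;>
      (have := abs_le.mp (le_trans (hB₁ x) h1)) <;>
      simp only [hR_def] at * <;> cases this <;> linarith [abs_nonneg B₂]
  have hmem₂ : ∀ x, f₂ x ∈ Icc (-R) R := by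
    intro x
    have h1 : B₂ ≤ |B₂| := le_abs_self _
    have := abs_le.mp (le_trans (hB₂ x) h1)
    constructor <;> simp only [hR_def] <;> cases this <;> linarith [abs_nonneg B₁]
  -- key pointwise inequality where f₂ - f₁ ≥ 0
  have key : ∀ t, 0 ≤ f₂ t - f₁ t →
      0 ≤ C₀ * (f₂ t - f₁ t) + a t * (f₂' t - f₁' t) := by
    intro t hgt
    have h1 := hord t
    have h2 := hC (f₁ t) (hmem₁ t) (f₂ t) (hmem₂ t) t
    have habs : |f₁ t - f₂ t| = f₂ t - f₁ t := by
      rw [abs_sub_comm]; exact abs_of_nonneg hgt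
    rw [habs] at h2
    have h3 : C * (f₂ t - f₁ t) ≤ C₀ * (f₂ t - f₁ t) :=
      mul_le_mul_of_nonneg_right (le_max_left _ _) hgt
    have h4 := (abs_le.mp h2).1
    nlinarith
  -- the set where ordering fails
  set S : Set ℝ := {x | x₀ ≤ x ∧ f₂ x ≤ f₁ x} with hS
  have hf₁cont : Continuous f₁ := by
    apply continuous_iff_continuousAt.mpr; intro x; exact (hf₁ x).continuousAt
  have hf₂cont : Continuous f₂ := by
    apply continuous_iff_continuousAt.mpr; intro x; exact (hf₂ x).continuousAt
  have hSclosed : IsClosed S := by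
    have : S = {x | x₀ ≤ x} ∩ {x | f₂ x ≤ f₁ x} := rfl
    rw [this]
    exact (isClosed_le continuous_const continuous_id).inter
      (isClosed_le hf₂cont hf₁cont)
  have hSne : S.Nonempty := ⟨y, hy₀, hyle⟩
  have hSbdd : BddBelow S := ⟨x₀, fun z hz => hz.1⟩
  set x₁ : ℝ := sInf S with hx₁
  have hx₁S : x₁ ∈ S := hSclosed.csInf_mem hSne hSbdd
  have hx₀x₁ : x₀ ≤ x₁ := le_csInf hSne (fun z hz => hz.1)
  have hx₀lt : x₀ < x₁ := by
    rcases lt_or_eq_of_le hx₀x₁ with h | h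
    · exact h
    · exfalso; rw [← h] at hx₁S; exact absurd hx₁S.2 (not_le.mpr h₀)
  have hgpos : ∀ t ∈ Ioo x₀ x₁, 0 < f₂ t - f₁ t := by
    intro t ht
    by_contra hle
    push_neg at hle
    have : t ∈ S := ⟨ht.1.le, by linarith⟩
    exact absurd (csInf_le hSbdd this) (not_le.mpr ht.2)
  -- the integrating factor
  have hca : Continuous (fun s => C₀ / a s) :=
    continuous_const.div ha_cont (fun s => (ha_pos s).ne')
  set F : ℝ → ℝ := fun x => ∫ s in x₀..x, C₀ / a s with hF
  have hFd : ∀ x, HasDerivAt F (C₀ / a x) x := by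
    intro x
    exact intervalIntegral.integral_hasDerivAt_right
      (hca.intervalIntegrable _ _)
      (hca.stronglyMeasurableAtFilter _ _) hca.continuousAt
  set ψ : ℝ → ℝ := fun x => Real.exp (F x) * (f₂ x - f₁ x) with hψ
  have hψd : ∀ x, HasDerivAt ψ
      (Real.exp (F x) * (C₀ / a x) * (f₂ x - f₁ x)
        + Real.exp (F x) * (f₂' x - f₁' x)) x := by
    intro x
    exact ((hFd x).exp).mul ((hf₂ x).sub (hf₁ x))
  have hψcont : ContinuousOn ψ (Icc x₀ x₁) :=
    (Continuous.continuousOn (by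
      apply continuous_iff_continuousAt.mpr
      intro x; exact (hψd x).continuousAt))
  have hψdiff : DifferentiableOn ℝ ψ (interior (Icc x₀ x₁)) := by
    intro x _; exact ((hψd x).differentiableAt).differentiableWithinAt
  have hψderiv_nonneg : ∀ x ∈ interior (Icc x₀ x₁), 0 ≤ deriv ψ x := by
    intro x hx
    rw [interior_Icc] at hx
    rw [(hψd x).deriv]
    have hg := (hgpos x hx).le
    have hk := key x hg
    have hax := ha_pos x
    have hdiv : 0 ≤ C₀ / a x * (f₂ x - f₁ x) + (f₂' x - f₁' x) := by
      have h := div_nonneg hk hax.le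
      have heq : (C₀ * (f₂ x - f₁ x) + a x * (f₂' x - f₁' x)) / a x
          = C₀ / a x * (f₂ x - f₁ x) + (f₂' x - f₁' x) := by
        field_simp
      rwa [heq] at h
    have hexp : 0 ≤ Real.exp (F x) := (Real.exp_pos _).le
    nlinarith
  have hmono : MonotoneOn ψ (Icc x₀ x₁) :=
    monotoneOn_of_deriv_nonneg (convex_Icc x₀ x₁) hψcont hψdiff hψderiv_nonneg
  have h1 : ψ x₀ ≤ ψ x₁ :=
    hmono (left_mem_Icc.mpr hx₀x₁) (right_mem_Icc.mpr hx₀x₁) hx₀x₁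
  have hψx₀ : 0 < ψ x₀ := by
    have : F x₀ = 0 := by simp [hF, intervalIntegral.integral_same]
    simp only [hψ, this, Real.exp_zero, one_mul]
    linarith
  have hψx₁ : ψ x₁ ≤ 0 := by
    have hg1 : f₂ x₁ - f₁ x₁ ≤ 0 := by linarith [hx₁S.2]
    exact mul_nonpos_of_nonneg_of_nonpos (Real.exp_pos _).le hg1
  linarith
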